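/- For self-adjoint operators A₁ and A₂ on ℂ^d, the spectrum of A₁ + A₂ (arranged in decreasing order) is majorized by the sum of the decreasingly ordered spectra of A₁ and A₂; that is, for every k ∈ [d], the sum of the k largest eigenvalues of A₁ + A₂ is at most the sum of the k largest eigenvalues of A₁ plus the sum of the k largest eigenvalues of A₂, with equality of total traces. -/

import Mathlib

open Matrix

/-- Sum of the `k` largest values of `f` (as the sup of sums over `k`-subsets). -/
noncomputable def sk {ι : Type*} [Fintype ι] (f : ι → ℝ) (k : ℕ) : ℝ :=
  sSup {x | ∃ S : Finset ι, S.card = k ∧ x = ∑ i ∈ S, f i}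

local notation "⟪" x ", " y "⟫" => @inner ℂ _ _ x y

section Aux

lemma sk_bddAbove {ι : Type*} [Fintype ι] (f : ι → ℝ) (k : ℕ) :
    BddAbove {x | ∃ S : Finset ι, S.card = k ∧ x = ∑ i ∈ S, f i} := by
  apply Set.Finite.bddAbove
  apply (Set.finite_range fun S : Finset ι => ∑ i ∈ S, f i).subset
  rintro x ⟨S, -, rfl⟩
  exact ⟨S, rfl⟩

lemma sum_le_sk {ι : Type*} [Fintype ι] (f : ι → ℝ) {k : ℕ} {S : Finset ι}
    (hS : S.card = k) : ∑ i ∈ S, f i ≤ sk f k :=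
  le_csSup (sk_bddAbove f k) ⟨S, hS, rfl⟩

lemma sk_le {ι : Type*} [Fintype ι] (f : ι → ℝ) {k : ℕ} (hk : k ≤ Fintype.card ι)
    {a : ℝ} (h : ∀ S : Finset ι, S.card = k → ∑ i ∈ S, f i ≤ a) : sk f k ≤ a := by
  apply csSup_le
  · obtain ⟨S, -, hS⟩ := Finset.exists_subset_card_eq
      (by simpa using hk : k ≤ (Finset.univ : Finset ι).card)
    exact ⟨_, S, hS, rfl⟩
  · rintro x ⟨S, hS, rfl⟩; exact h S hS

lemma sk_univ {ι : Type*} [Fintype ι] (f : ι → ℝ) :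
    sk f (Fintype.card ι) = ∑ i, f i := by
  have : {x | ∃ S : Finset ι, S.card = Fintype.card ι ∧ x = ∑ i ∈ S, f i} = {∑ i, f i} := by
    ext x
    constructor
    · rintro ⟨S, hS, rfl⟩
      rw [(Finset.card_eq_iff_eq_univ S).mp hS]; rfl
    · rintro rfl; exact ⟨Finset.univ, rfl, rfl⟩
  rw [sk, this, csSup_singleton]

lemma weighted_le_sk {d : ℕ} (f c : Fin d → ℝ) {k : ℕ} (hk : k ≤ d)
    (hc0 : ∀ j, 0 ≤ c j) (hc1 : ∀ j, c j ≤ 1) (hsum : ∑ j, c j = (k : ℝ)) :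
    ∑ j, c j * f j ≤ sk f k := by
  rcases Nat.eq_zero_or_pos k with rfl | hkpos
  · have hzero : ∀ j ∈ Finset.univ, c j = 0 := by
      intro j _
      exact (Finset.sum_eq_zero_iff_of_nonneg (fun j _ => hc0 j)).mp
        (by simpa using hsum) j (Finset.mem_univ j)
    have : ∑ j, c j * f j = 0 := Finset.sum_eq_zero fun j hj => by rw [hzero j hj, zero_mul]
    rw [this]
    simpa using sum_le_sk f (S := (∅ : Finset (Fin d))) rfl
  · set σ : Equiv.Perm (Fin d) := Tuple.sort (fun i => -f i) with hσ
    have hmono : Monotone ((fun i => -f i) ∘ σ) := Tuple.monotone_sort _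
    have hanti : ∀ i j : Fin d, i ≤ j → f (σ j) ≤ f (σ i) := by
      intro i j hij
      have := hmono hij
      simp only [Function.comp_apply, neg_le_neg_iff] at this
      linarith
    have hd : 0 < d := lt_of_lt_of_le hkpos hk
    set m : Fin d := ⟨k - 1, by omega⟩ with hm
    set t : ℝ := f (σ m) with ht
    set S0 : Finset (Fin d) := Finset.univ.filter (fun i => (i : ℕ) < k) with hS0
    have hS0card : S0.card = k := by
      have : S0 = Finset.map (Fin.castLEEmb hk) Finset.univ := by
        ext j
        simp only [hS0, Finset.mem_filter, Finset.mem_univ, true_and, Finset.mem_map,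
          Fin.castLEEmb, Function.Embedding.coeFn_mk]
        constructor
        · intro hj; exact ⟨⟨j, hj⟩, by simp [Fin.ext_iff, Fin.castLE]⟩
        · rintro ⟨i, rfl⟩; simpa using i.2
      rw [this, Finset.card_map, Finset.card_univ, Fintype.card_fin]
    set S : Finset (Fin d) := S0.image σ with hS
    have hScard : S.card = k := by
      rw [hS, Finset.card_image_of_injective _ σ.injective, hS0card]
    have hmemS : ∀ j ∈ S, t ≤ f j := by
      intro j hj
      rw [hS, Finset.mem_image] at hj
      obtain ⟨i, hi, rfl⟩ := hj
      rw [hS0, Finset.mem_filter] at hi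
      exact hanti i m (by simp only [hm, Fin.le_def]; omega)
    have hnotS : ∀ j ∉ S, f j ≤ t := by
      intro j hj
      have : σ.symm j ∉ S0 := fun h => hj (by
        rw [hS, Finset.mem_image]; exact ⟨σ.symm j, h, σ.apply_symm_apply j⟩)
      rw [hS0, Finset.mem_filter] at this
      push_neg at this
      have hge : k ≤ (σ.symm j : ℕ) := this (Finset.mem_univ _)
      have := hanti m (σ.symm j) (by simp only [hm, Fin.le_def]; omega)
      rwa [σ.apply_symm_apply] at this
    have key : ∑ j, c j * (f j - t) ≤ ∑ j ∈ S, (f j - t) := by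
      rw [← Finset.sum_filter_add_sum_filter_not Finset.univ (· ∈ S)]
      have h1 : ∑ j ∈ Finset.univ.filter (· ∈ S), c j * (f j - t) ≤ ∑ j ∈ S, (f j - t) := by
        rw [Finset.filter_mem_eq_inter, Finset.univ_inter]
        apply Finset.sum_le_sum
        intro j hj
        have h := hmemS j hj
        nlinarith [hc1 j, hc0 j]
      have h2 : ∑ j ∈ Finset.univ.filter (¬ · ∈ S), c j * (f j - t) ≤ 0 := by
        apply Finset.sum_nonpos
        intro j hj
        rw [Finset.mem_filter] at hj
        have := hnotS j hj.2
        nlinarith [hc0 j]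
      linarith
    have expand : ∑ j, c j * f j = ∑ j, c j * (f j - t) + t * k := by
      rw [← hsum, Finset.mul_sum, ← Finset.sum_add_distrib]
      congr 1; ext j; ring
    have expand2 : ∑ j ∈ S, (f j - t) = ∑ j ∈ S, f j - t * k := by
      rw [Finset.sum_sub_distrib, Finset.sum_const, hScard]
      ring
    have := sum_le_sk f hScard
    linarith

lemma conj_trick (z : ℂ) : z * (starRingEnd ℂ) z = ((‖z‖ ^ 2 : ℝ) : ℂ) := by
  rw [Complex.mul_conj]
  norm_cast
  simp [Complex.normSq_eq_norm_sq]

lemma parseval {d : ℕ} (b : OrthonormalBasis (Fin d) ℂ (EuclideanSpace ℂ (Fin d)))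
    (x : EuclideanSpace ℂ (Fin d)) : ∑ j, ‖⟪b j, x⟫‖ ^ 2 = ‖x‖ ^ 2 := by
  have h := b.sum_inner_mul_inner x x
  have e : ∀ j : Fin d, ⟪x, b j⟫ * ⟪b j, x⟫ = ((‖⟪b j, x⟫‖ ^ 2 : ℝ) : ℂ) := by
    intro j
    rw [← inner_conj_symm x (b j), mul_comm, conj_trick]
  simp_rw [e] at h
  rw [← Complex.ofReal_sum, @inner_self_eq_norm_sq_to_K ℂ, ← RCLike.ofReal_pow] at h
  exact RCLike.ofReal_injective (K := ℂ) h

lemma toEuclideanLin_eigen {d : ℕ} {A : Matrix (Fin d) (Fin d) ℂ} (hA : A.IsHermitian)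
    (j : Fin d) :
    Matrix.toEuclideanLin A (hA.eigenvectorBasis j)
      = (hA.eigenvalues j : ℂ) • hA.eigenvectorBasis j := by
  apply PiLp.ext
  intro i
  have h := congrFun (hA.mulVec_eigenvectorBasis j) i
  simp only [Matrix.toEuclideanLin_apply, PiLp.smul_apply, smul_eq_mul]
  simpa [Pi.smul_apply, Complex.real_smul] using h

lemma quad_expand {d : ℕ} {A : Matrix (Fin d) (Fin d) ℂ} (hA : A.IsHermitian)
    (x : EuclideanSpace ℂ (Fin d)) :
    RCLike.re ⟪x, Matrix.toEuclideanLin A x⟫ =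
      ∑ j, hA.eigenvalues j * ‖⟪hA.eigenvectorBasis j, x⟫‖ ^ 2 := by
  set b := hA.eigenvectorBasis
  set T := Matrix.toEuclideanLin A
  have hsym : T.IsSymmetric := Matrix.isHermitian_iff_isSymmetric.mp hA
  have key : ⟪x, T x⟫ = ∑ j, ((hA.eigenvalues j * ‖⟪b j, x⟫‖ ^ 2 : ℝ) : ℂ) := by
    rw [← b.sum_inner_mul_inner x (T x)]
    congr 1; ext j
    have h1 : ⟪b j, T x⟫ = (hA.eigenvalues j : ℂ) * ⟪b j, x⟫ := by
      rw [← hsym (b j) x, toEuclideanLin_eigen hA j, inner_smul_left]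
      simp [Complex.conj_ofReal]
      exact Or.inl rfl
    rw [h1, ← inner_conj_symm x (b j)]
    rw [show ∀ z w : ℂ, (starRingEnd ℂ) z * (w * z) = w * (z * (starRingEnd ℂ) z) by
      intros; ring]
    rw [conj_trick, ← Complex.ofReal_mul]
  rw [key, map_sum]
  simp only [RCLike.re_to_complex, Complex.ofReal_re]

/-- Ky Fan's upper bound: the sum of quadratic forms over an orthonormal family of size `k`
is at most the sum of the `k` largest eigenvalues. -/
lemma kyfan_bound {d k : ℕ} {A : Matrix (Fin d) (Fin d) ℂ} (hA : A.IsHermitian)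
    (hk : k ≤ d) {ι' : Type*} [Fintype ι'] (hcard : Fintype.card ι' = k)
    {v : ι' → EuclideanSpace ℂ (Fin d)} (hv : Orthonormal ℂ v) :
    ∑ i, RCLike.re ⟪v i, Matrix.toEuclideanLin A (v i)⟫ ≤ sk hA.eigenvalues k := by
  classical
  set b := hA.eigenvectorBasis with hb
  set c : Fin d → ℝ := fun j => ∑ i, ‖⟪b j, v i⟫‖ ^ 2 with hc
  have hswap : ∑ i, RCLike.re ⟪v i, Matrix.toEuclideanLin A (v i)⟫
      = ∑ j, c j * hA.eigenvalues j := by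
    simp_rw [quad_expand hA, ← hb]
    rw [Finset.sum_comm]
    congr 1; ext j
    rw [hc, Finset.sum_mul]
    congr 1; ext i; ring
  have hc0 : ∀ j, 0 ≤ c j := fun j => Finset.sum_nonneg fun i _ => by positivity
  have hc1 : ∀ j, c j ≤ 1 := by
    intro j
    have h := hv.sum_inner_products_le (b j) (s := Finset.univ)
    have hb1 : ‖b j‖ = 1 := b.orthonormal.1 j
    calc c j = ∑ i, ‖⟪v i, b j⟫‖ ^ 2 := by
          simp_rw [hc]; congr 1; ext i; rw [norm_inner_symm]
      _ ≤ ‖b j‖ ^ 2 := h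
      _ = 1 := by rw [hb1]; norm_num
  have hsum : ∑ j, c j = (k : ℝ) := by
    rw [Finset.sum_comm]
    have : ∀ i : ι', ∑ j, ‖⟪b j, v i⟫‖ ^ 2 = 1 := by
      intro i
      rw [parseval b (v i), hv.1 i]; norm_num
    simp_rw [this]
    simp [hcard]
  calc ∑ i, RCLike.re ⟪v i, Matrix.toEuclideanLin A (v i)⟫
      = ∑ j, c j * hA.eigenvalues j := hswap
    _ ≤ sk hA.eigenvalues k := weighted_le_sk _ c hk hc0 hc1 hsum

lemma trace_eq_sum_eig {d : ℕ} {A : Matrix (Fin d) (Fin d) ℂ} (hA : A.IsHermitian) :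
    A.trace = ∑ i, (hA.eigenvalues i : ℂ) := by
  conv_lhs => rw [hA.spectral_theorem]
  rw [Unitary.conjStarAlgAut_apply, Matrix.trace_mul_cycle,
    Matrix.mem_unitaryGroup_iff'.mp (hA.eigenvectorUnitary).2, one_mul,
    Matrix.trace_diagonal]
  rfl

end Aux

/-- Ky Fan's majorization relation: λ(A₁ + A₂) ⪯ λ(A₁) + λ(A₂). -/
theorem stmt0 {d : ℕ} (A₁ A₂ : Matrix (Fin d) (Fin d) ℂ)
    (hA₁ : A₁.IsHermitian) (hA₂ : A₂.IsHermitian) :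
    (∀ k ≤ d, sk (hA₁.add hA₂).eigenvalues k ≤ sk hA₁.eigenvalues k + sk hA₂.eigenvalues k)
      ∧ sk (hA₁.add hA₂).eigenvalues d = sk hA₁.eigenvalues d + sk hA₂.eigenvalues d := by
  classical
  have hA := hA₁.add hA₂
  constructor
  · intro k hk
    apply sk_le _ (by simpa using hk)
    intro S hS
    -- the orthonormal family given by eigenvectors of A₁+A₂ indexed by S
    set b := (hA₁.add hA₂).eigenvectorBasis with hb
    have hon : Orthonormal ℂ (fun i : {x // x ∈ S} => b i.1) :=
      b.orthonormal.comp _ Subtype.val_injective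
    have hcard : Fintype.card {x // x ∈ S} = k := by rw [Fintype.card_coe, hS]
    have step1 : ∑ i ∈ S, (hA₁.add hA₂).eigenvalues i
        = ∑ i : {x // x ∈ S}, RCLike.re ⟪b i.1, Matrix.toEuclideanLin (A₁ + A₂) (b i.1)⟫ := by
      rw [← Finset.sum_coe_sort S]
      congr 1; ext i
      rw [toEuclideanLin_eigen (hA₁.add hA₂) i.1, inner_smul_right]
      have : ⟪b i.1, b i.1⟫ = 1 := by
        rw [@inner_self_eq_norm_sq_to_K ℂ, b.orthonormal.1 i.1]; norm_num
      rw [this, mul_one]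
      simp
    have step2 : ∀ x : EuclideanSpace ℂ (Fin d),
        RCLike.re ⟪x, Matrix.toEuclideanLin (A₁ + A₂) x⟫
          = RCLike.re ⟪x, Matrix.toEuclideanLin A₁ x⟫
            + RCLike.re ⟪x, Matrix.toEuclideanLin A₂ x⟫ := by
      intro x
      rw [map_add, LinearMap.add_apply, inner_add_right, map_add]
    rw [step1]
    simp_rw [step2]
    rw [Finset.sum_add_distrib]
    gcongr
    · exact kyfan_bound hA₁ hk hcard hon
    · exact kyfan_bound hA₂ hk hcard hon
  · have h1 : sk (hA₁.add hA₂).eigenvalues d = ∑ i, (hA₁.add hA₂).eigenvalues i := by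
      simpa using sk_univ (hA₁.add hA₂).eigenvalues
    have h2 : sk hA₁.eigenvalues d = ∑ i, hA₁.eigenvalues i := by
      simpa using sk_univ hA₁.eigenvalues
    have h3 : sk hA₂.eigenvalues d = ∑ i, hA₂.eigenvalues i := by
      simpa using sk_univ hA₂.eigenvalues
    rw [h1, h2, h3]
    have htr : (A₁ + A₂).trace = A₁.trace + A₂.trace := Matrix.trace_add A₁ A₂
    rw [trace_eq_sum_eig (hA₁.add hA₂), trace_eq_sum_eig hA₁, trace_eq_sum_eig hA₂] at htr
    have : ((∑ i, (hA₁.add hA₂).eigenvalues i : ℝ) : ℂ)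
        = ((∑ i, hA₁.eigenvalues i + ∑ i, hA₂.eigenvalues i : ℝ) : ℂ) := by
      push_cast
      simpa using htr
    exact Complex.ofReal_injective this
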